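/- Let Γ be a simple directed graph, R an integral domain, W the free R-module with basis V(Γ), and f a weight function assigning a nonzero element of R to every edge. For each vertex x define the R-linear endomorphism θ_x of W by θ_x(y) = y for y ≠ x and θ_x(x) = Σ_{z → x} f(z,x)·z (sum over all edges into x). Then the assignment x ↦ θ_x extends to a well-defined monoid homomorphism R_f : HK_Γ → End_R(W). -/

import Mathlib

/-- One-step Hecke-Kiselman edge relations for a directed graph with edge relation `E`. -/
def HKRel {V : Type*} (E : V → V → Prop) : FreeMonoid V → FreeMonoid V → Prop := fun a b =>
  (∃ x : V, a = FreeMonoid.of x * FreeMonoid.of x ∧ b = FreeMonoid.of x) ∨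
  (∃ x y : V, x ≠ y ∧ ¬ E x y ∧ ¬ E y x ∧
    a = FreeMonoid.of x * FreeMonoid.of y ∧ b = FreeMonoid.of y * FreeMonoid.of x) ∨
  (∃ x y : V, E x y ∧ ¬ E y x ∧
    a = FreeMonoid.of x * FreeMonoid.of y * FreeMonoid.of x ∧
    b = FreeMonoid.of y * FreeMonoid.of x * FreeMonoid.of y) ∨
  (∃ x y : V, E x y ∧ ¬ E y x ∧
    a = FreeMonoid.of x * FreeMonoid.of y * FreeMonoid.of x ∧
    b = FreeMonoid.of x * FreeMonoid.of y) ∨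
  (∃ x y : V, E x y ∧ E y x ∧
    a = FreeMonoid.of x * FreeMonoid.of y * FreeMonoid.of x ∧
    b = FreeMonoid.of y * FreeMonoid.of x * FreeMonoid.of y)

/-- The congruence on the free monoid generated by the Hecke-Kiselman relations. -/
def HKCon {V : Type*} (E : V → V → Prop) : Con (FreeMonoid V) := conGen (HKRel E)

/-- The Hecke-Kiselman monoid of the directed graph `(V, E)`. -/
def HK {V : Type*} (E : V → V → Prop) := (HKCon E).Quotient

instance {V : Type*} (E : V → V → Prop) : Monoid (HK E) :=
  inferInstanceAs (Monoid (HKCon E).Quotient)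

/-- The canonical quotient map. -/
def HKmk {V : Type*} (E : V → V → Prop) : FreeMonoid V →* HK E := (HKCon E).mk'

/-- The content of an element: vertices occurring in some representing word. -/
def elemContent {V : Type*} (E : V → V → Prop) (x : HK E) : Set V :=
  {v | ∃ w : FreeMonoid V, HKmk E w = x ∧ v ∈ FreeMonoid.toList w}

open scoped Classical

/-- The atomic endomorphism `θ_x` of the free module `V →₀ R`:
`θ_x(y) = y` for `y ≠ x`, and `θ_x(x) = Σ_{z → x} f z x • z`. -/
noncomputable def theta {V : Type*} [Fintype V] {R : Type*} [CommRing R]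
    (E : V → V → Prop) (f : V → V → R) (x : V) : Module.End R (V →₀ R) :=
  Finsupp.lsum R fun y =>
    if y = x then ∑ z : V, if E z x then f z x • (Finsupp.lsingle z : R →ₗ[R] V →₀ R) else 0
    else Finsupp.lsingle y

/-- The representation of the free monoid on words, sending a word to the composition of
the atomic endomorphisms of its letters. -/
noncomputable def Rword {V : Type*} [Fintype V] {R : Type*} [CommRing R]
    (E : V → V → Prop) (f : V → V → R) : FreeMonoid V →* Module.End R (V →₀ R) :=
  FreeMonoid.lift (theta E f)

section Aux
variable {V : Type*} [Fintype V] {R : Type*} [CommRing R]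

/-- `θ_x(x·c)` as a sum. -/
noncomputable def thetaSum (E : V → V → Prop) (f : V → V → R) (x : V) (c : R) : V →₀ R :=
  ∑ z : V, if E z x then f z x • Finsupp.single z c else 0

lemma theta_single (E : V → V → Prop) (f : V → V → R) (x y : V) (c : R) :
    theta E f x (Finsupp.single y c) =
      if y = x then thetaSum E f x c else Finsupp.single y c := by
  rw [theta, Finsupp.lsum_single]
  split_ifs with h
  · simp [thetaSum, LinearMap.sum_apply, apply_ite (fun (L : R →ₗ[R] V →₀ R) => L c)]
  · rfl

lemma theta_fix (E : V → V → Prop) (f : V → V → R) {x z : V} (h : z ≠ x) (c : R) :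
    theta E f x (Finsupp.single z c) = Finsupp.single z c := by
  rw [theta_single]; simp [h]

lemma theta_self (E : V → V → Prop) (f : V → V → R) (x : V) (c : R) :
    theta E f x (Finsupp.single x c) = thetaSum E f x c := by
  rw [theta_single]; simp

lemma theta_self' (E : V → V → Prop) (f : V → V → R) {x a : V} (h : a = x) (c : R) :
    theta E f x (Finsupp.single a c) = thetaSum E f x c := by
  subst h; exact theta_self E f a c

lemma theta_thetaSum (E : V → V → Prop) (f : V → V → R) {x y : V}
    (h : ∀ z, E z y → z ≠ x) (c : R) :
    theta E f x (thetaSum E f y c) = thetaSum E f y c := by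
  rw [thetaSum, map_sum]
  refine Finset.sum_congr rfl fun z _ => ?_
  split_ifs with hz
  · rw [map_smul, theta_fix E f (h z hz) c]
  · exact map_zero _

lemma theta_theta_thetaSum (E : V → V → Prop) (f : V → V → R) {u x y : V}
    (h1 : ∀ z, E z y → z ≠ x → z ≠ u) (h2 : ∀ w, E w x → w ≠ u) (c : R) :
    theta E f u (theta E f x (thetaSum E f y c)) = theta E f x (thetaSum E f y c) := by
  rw [thetaSum, map_sum, map_sum]
  refine Finset.sum_congr rfl fun z _ => ?_
  split_ifs with hz
  · rw [map_smul, map_smul]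
    by_cases hzx : z = x
    · subst hzx
      rw [theta_self, theta_thetaSum E f h2]
    · rw [theta_fix E f hzx, theta_fix E f (h1 z hz hzx)]
  · simp

end Aux


/-- For a simple directed graph (no loops, no bidirected edges) and a weight function with
nonzero values in an integral domain, the assignment `x ↦ θ_x` extends to a well-defined
monoid homomorphism `R_f : HK_Γ → End_R(W)`. -/
theorem hk_weighted_representation_well_defined {V : Type*} [Fintype V]
    {R : Type*} [CommRing R] [IsDomain R]
    (E : V → V → Prop) (hloop : ∀ x, ¬ E x x) (hbidir : ∀ x y, ¬ (E x y ∧ E y x))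
    (f : V → V → R) (hf : ∀ x y, E x y → f x y ≠ 0) :
    ∃ φ : HK E →* Module.End R (V →₀ R), ∀ w : FreeMonoid V, φ (HKmk E w) = Rword E f w := by
  have key : ∀ a b : FreeMonoid V, HKRel E a b → Rword E f a = Rword E f b := by
    rintro a b (⟨x, ha, hb⟩ | ⟨x, y, hxy, hExy, hEyx, ha, hb⟩ |
      ⟨x, y, hExy, hEyx, ha, hb⟩ | ⟨x, y, hExy, hEyx, ha, hb⟩ | ⟨x, y, hExy, hEyx, ha, hb⟩)
    · -- x x = x
      subst ha; subst hb
      simp only [Rword, map_mul, FreeMonoid.lift_eval_of]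
      refine Finsupp.lhom_ext fun a c => ?_
      rw [Module.End.mul_apply]
      by_cases hax : a = x
      · rw [theta_self' E f hax, theta_thetaSum E f (fun z hz h => hloop x (by rwa [h] at hz)) c]
      · simp only [theta_fix E f hax]
    · -- commuting
      subst ha; subst hb
      have hey : ∀ z, E z y → z ≠ x := fun z hz h => hExy (h ▸ hz)
      have hex : ∀ z, E z x → z ≠ y := fun z hz h => hEyx (h ▸ hz)
      simp only [Rword, map_mul, FreeMonoid.lift_eval_of]
      refine Finsupp.lhom_ext fun a c => ?_
      simp only [Module.End.mul_apply]
      by_cases hax : a = x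
      · have hay : a ≠ y := hax ▸ hxy
        rw [theta_fix E f hay, theta_self' E f hax, theta_thetaSum E f hex c]
      · by_cases hay : a = y
        · rw [theta_fix E f hax, theta_self' E f hay, theta_thetaSum E f hey c]
        · simp only [theta_fix E f hax, theta_fix E f hay]
    · -- xyx = yxy
      subst ha; subst hb
      have hxy : x ≠ y := fun h => hloop y (h ▸ hExy)
      have hex : ∀ z, E z x → z ≠ y := fun z hz h => hEyx (h ▸ hz)
      have hex' : ∀ z, E z x → z ≠ x := fun z hz h => hloop x (by rwa [h] at hz)
      simp only [Rword, map_mul, FreeMonoid.lift_eval_of]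
      refine Finsupp.lhom_ext fun a c => ?_
      simp only [Module.End.mul_apply]
      by_cases hax : a = x
      · have hay : a ≠ y := hax ▸ hxy
        rw [theta_fix E f hay, theta_self' E f hax, theta_thetaSum E f hex c,
          theta_thetaSum E f hex' c]
      · by_cases hay : a = y
        · rw [theta_fix E f hax, theta_self' E f hay,
            theta_theta_thetaSum E f (fun z hz hzx h => hloop y (by rwa [h] at hz)) hex c]
        · simp only [theta_fix E f hax, theta_fix E f hay]
    · -- xyx = xy
      subst ha; subst hb
      have hxy : x ≠ y := fun h => hloop y (h ▸ hExy)
      have hex : ∀ z, E z x → z ≠ y := fun z hz h => hEyx (h ▸ hz)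
      have hex' : ∀ z, E z x → z ≠ x := fun z hz h => hloop x (by rwa [h] at hz)
      simp only [Rword, map_mul, FreeMonoid.lift_eval_of]
      refine Finsupp.lhom_ext fun a c => ?_
      simp only [Module.End.mul_apply]
      by_cases hax : a = x
      · have hay : a ≠ y := hax ▸ hxy
        rw [theta_fix E f hay, theta_self' E f hax, theta_thetaSum E f hex c,
          theta_thetaSum E f hex' c]
      · by_cases hay : a = y
        · rw [theta_fix E f hax, theta_self' E f hay]
        · simp only [theta_fix E f hax, theta_fix E f hay]
    · exact absurd ⟨hExy, hEyx⟩ (hbidir x y)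
  have hle : HKCon E ≤ Con.ker (Rword E f) := Con.conGen_le.2 key
  exact ⟨(HKCon E).lift (Rword E f) hle, fun w => rfl⟩
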